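/- Let X be a Tychonoff space and let Y₁ and Y₂ be one-point Tychonoff extensions of X, with τᵢ : βX → βYᵢ the unique continuous extension of the identity map of X (i = 1, 2). Then Y₁ ≤ Y₂ (that is, there is a continuous map from Y₂ into Y₁ fixing X pointwise) if and only if τ₂⁻¹(Y₂\X) ⊆ τ₁⁻¹(Y₁\X). -/

import Mathlib

open Set Topology Filter

universe u

/-- If `Y` is Tychonoff, `C ⊆ Y` is closed and `p ∉ C`, then `stoneCechUnit p` is not in the
closure of `stoneCechUnit '' C` in `βY`. -/
lemma stoneCechUnit_not_mem_closure_image {Y : Type u} [TopologicalSpace Y] [T35Space Y]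
    {C : Set Y} (hC : IsClosed C) {p : Y} (hp : p ∉ C) :
    stoneCechUnit p ∉ closure (stoneCechUnit '' C) := by
  obtain ⟨f, fc, f0, f1⟩ := CompletelyRegularSpace.completely_regular p C hC hp
  have hG : Continuous (stoneCechExtend fc) := continuous_stoneCechExtend fc
  have hsub : closure (stoneCechUnit '' C) ⊆ stoneCechExtend fc ⁻¹' {1} := by
    apply closure_minimal
    · rintro _ ⟨c, hc, rfl⟩
      have h1 : stoneCechExtend fc (stoneCechUnit c) = f c :=
        congrFun (stoneCechExtend_extends fc) c
      have h2 : f c = 1 := f1 hc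
      simp [mem_preimage, h1, h2]
    · exact isClosed_singleton.preimage hG
  intro h
  have h3 := hsub h
  rw [mem_preimage, mem_singleton_iff] at h3
  have h4 : stoneCechExtend fc (stoneCechUnit p) = f p :=
    congrFun (stoneCechExtend_extends fc) p
  rw [h4, f0] at h3
  exact zero_ne_one h3

/-- Let `X` be a Tychonoff space and let `Y₁, Y₂` be one-point Tychonoff
extensions of `X`, with `τᵢ : βX → βYᵢ` the unique continuous extension of the identity map of
`X`.  Then `Y₁ ≤ Y₂` (there is a continuous map from `Y₂` into `Y₁` fixing `X` pointwise) if and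
only if `τ₂⁻¹(Y₂ \ X) ⊆ τ₁⁻¹(Y₁ \ X)`. -/
theorem stmt1 {X : Type u} [TopologicalSpace X] [T35Space X]
    -- `Y₁` is a one-point Tychonoff extension of `X`, with remainder point `p₁`
    (Y1 : Type u) [TopologicalSpace Y1] [T35Space Y1]
    (ι1 : X → Y1) (hemb1 : Topology.IsEmbedding ι1) (hdense1 : DenseRange ι1)
    (p1 : Y1) (hp1 : Set.range ι1 = {p1}ᶜ)
    -- `Y₂` is a one-point Tychonoff extension of `X`, with remainder point `p₂`
    (Y2 : Type u) [TopologicalSpace Y2] [T35Space Y2]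
    (ι2 : X → Y2) (hemb2 : Topology.IsEmbedding ι2) (hdense2 : DenseRange ι2)
    (p2 : Y2) (hp2 : Set.range ι2 = {p2}ᶜ)
    -- `τᵢ : βX → βYᵢ` is the (unique) continuous extension of `id_X`
    (τ1 : StoneCech X → StoneCech Y1) (hτ1 : Continuous τ1)
    (hext1 : ∀ x : X, τ1 (stoneCechUnit x) = stoneCechUnit (ι1 x))
    (τ2 : StoneCech X → StoneCech Y2) (hτ2 : Continuous τ2)
    (hext2 : ∀ x : X, τ2 (stoneCechUnit x) = stoneCechUnit (ι2 x)) :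
    (∃ f : Y2 → Y1, Continuous f ∧ ∀ x : X, f (ι2 x) = ι1 x) ↔
      τ2 ⁻¹' {stoneCechUnit p2} ⊆ τ1 ⁻¹' {stoneCechUnit p1} := by
  have hp2nr : p2 ∉ range ι2 := by rw [hp2]; simp
  have hopen2 : IsOpen (range ι2) := by rw [hp2]; exact isOpen_compl_singleton
  constructor
  · rintro ⟨f, fc, hf⟩ z hz
    simp only [mem_preimage, mem_singleton_iff] at hz ⊢
    -- step 1: `f p2 = p1`
    have hfp2 : f p2 = p1 := by
      by_contra hne
      have hr : f p2 ∈ range ι1 := by rw [hp1]; exact hne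
      obtain ⟨x0, hx0⟩ := hr
      set F := comap ι2 (𝓝 p2) with hF
      have hNB : F.NeBot :=
        (IsDenseInducing.mk hemb2.toIsInducing hdense2).comap_nhds_neBot p2
      have h1 : Tendsto ι2 F (𝓝 p2) := tendsto_comap
      have h2 : Tendsto (f ∘ ι2) F (𝓝 (ι1 x0)) := by
        rw [hx0]
        exact Filter.Tendsto.comp fc.continuousAt h1
      have h3 : Tendsto ι1 F (𝓝 (ι1 x0)) := h2.congr fun x => hf x
      have h4 : Tendsto id F (𝓝 x0) := (hemb1.tendsto_nhds_iff).mpr h3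
      have h5 : Tendsto ι2 F (𝓝 (ι2 x0)) :=
        Filter.Tendsto.comp (hemb2.continuous.continuousAt) h4
      exact hp2nr ⟨x0, tendsto_nhds_unique h5 h1⟩
    -- step 2: extend `f` to the Stone–Čech compactifications
    have hcomp : Continuous (stoneCechUnit ∘ f : Y2 → StoneCech Y1) :=
      continuous_stoneCechUnit.comp fc
    have hFτ : stoneCechExtend hcomp ∘ τ2 = τ1 := by
      apply stoneCech_hom_ext ((continuous_stoneCechExtend hcomp).comp hτ2) hτ1
      funext x
      have e1 : stoneCechExtend hcomp (stoneCechUnit (ι2 x)) = stoneCechUnit (f (ι2 x)) :=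
        congrFun (stoneCechExtend_extends hcomp) (ι2 x)
      simp only [Function.comp_apply, hext2, e1, hf x, hext1]
    calc τ1 z = stoneCechExtend hcomp (τ2 z) := (congrFun hFτ z).symm
      _ = stoneCechExtend hcomp (stoneCechUnit p2) := by rw [hz]
      _ = stoneCechUnit (f p2) := congrFun (stoneCechExtend_extends hcomp) p2
      _ = stoneCechUnit p1 := by rw [hfp2]
  · intro H
    have hinj2 : Function.Injective ι2 := hemb2.injective
    refine ⟨Function.extend ι2 ι1 (fun _ => p1), ?_, fun x => hinj2.extend_apply _ _ x⟩
    set f := Function.extend ι2 ι1 fun _ => p1 with hfdef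
    have hfι : ∀ x, f (ι2 x) = ι1 x := fun x => hinj2.extend_apply _ _ x
    have hfp2 : f p2 = p1 := Function.extend_apply' _ _ _ (by
      rintro ⟨x, hx⟩; exact hp2nr ⟨x, hx⟩)
    rw [continuous_iff_continuousAt]
    intro y
    by_cases hy : y = p2
    · rw [hy, ContinuousAt, hfp2, tendsto_def]
      intro W hW
      obtain ⟨V, hVW, hVopen, hpV⟩ := mem_nhds_iff.mp hW
      set B : Set X := ι1 ⁻¹' Vᶜ with hB
      set S : Set Y2 := ι2 '' B with hS
      have hclS : p2 ∉ closure S := by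
        intro hcl
        have h1 : stoneCechUnit p2 ∈ closure (stoneCechUnit '' S) :=
          map_mem_closure continuous_stoneCechUnit hcl (mapsTo_image _ _)
        have himg : stoneCechUnit '' S = τ2 '' (stoneCechUnit '' B) := by
          rw [hS, ← image_comp, ← image_comp]
          apply image_congr
          intro x _
          exact (hext2 x).symm
        set T : Set (StoneCech X) := stoneCechUnit '' B with hT
        have hTc : IsCompact (closure T) := isClosed_closure.isCompact
        have hsub : closure (τ2 '' T) ⊆ τ2 '' closure T :=
          closure_minimal (image_mono subset_closure) (hTc.image hτ2).isClosed
        have h2 : stoneCechUnit p2 ∈ τ2 '' closure T := hsub (himg ▸ h1)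
        obtain ⟨z, hzT, hz⟩ := h2
        have hτ1z : τ1 z = stoneCechUnit p1 := H (by simpa using hz)
        have h3 : τ1 z ∈ closure (τ1 '' T) :=
          (image_closure_subset_closure_image hτ1) (mem_image_of_mem _ hzT)
        have h4 : τ1 '' T ⊆ stoneCechUnit '' Vᶜ := by
          rw [hT, ← image_comp]
          rintro _ ⟨x, hx, rfl⟩
          exact ⟨ι1 x, hx, (hext1 x).symm⟩
        have h5 : stoneCechUnit p1 ∈ closure (stoneCechUnit '' Vᶜ) := by
          rw [← hτ1z]
          exact closure_mono h4 h3
        exact stoneCechUnit_not_mem_closure_image (isClosed_compl_iff.mpr hVopen) (by simp [hpV]) h5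
      refine mem_of_superset ((isClosed_closure.isOpen_compl).mem_nhds hclS) ?_
      intro y hyS
      have hynS : y ∉ S := fun h => hyS (subset_closure h)
      by_cases hyp : y = p2
      · subst hyp
        simpa [hfp2] using hVW hpV
      · have hyr : y ∈ range ι2 := by rw [hp2]; exact hyp
        obtain ⟨x, rfl⟩ := hyr
        have hxB : x ∉ B := fun h => hynS ⟨x, h, rfl⟩
        have : ι1 x ∈ V := by simpa [hB] using hxB
        simpa [hfι x] using hVW this
    · have hyr : y ∈ range ι2 := by rw [hp2]; exact hy
      obtain ⟨x, rfl⟩ := hyr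
      have hoe : Topology.IsOpenEmbedding ι2 := ⟨hemb2, hopen2⟩
      rw [ContinuousAt, ← hoe.map_nhds_eq x, tendsto_map'_iff]
      have : Tendsto ι1 (𝓝 x) (𝓝 (ι1 x)) := hemb1.continuous.continuousAt
      refine Tendsto.congr (fun a => (hfι a).symm) ?_
      rwa [hfι x]
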